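/- For z with |z| bounded, the approximation error of the quadratic Taylor surrogate of the logistic loss satisfies |log(1 + e^{−z}) − (log 2 − z/2 + z²/8)| ≤ z⁴/192 for all z ∈ ℝ. -/

import Mathlib

open Real Set

lemma nonneg_of_deriv (f f' : ℝ → ℝ) (hd : ∀ x, HasDerivAt f (f' x) x)
    (h0 : f 0 = 0) (hf' : ∀ x, 0 ≤ x → 0 ≤ f' x) {z : ℝ} (hz : 0 ≤ z) : 0 ≤ f z := by
  have hmono : MonotoneOn f (Set.Ici 0) := by
    apply monotoneOn_of_deriv_nonneg (convex_Ici 0)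
    · exact fun x _ => (hd x).continuousAt.continuousWithinAt
    · intro x hx
      exact (hd x).differentiableAt.differentiableWithinAt
    · intro x hx
      rw [(hd x).deriv]
      rw [interior_Ici] at hx
      exact hf' x (le_of_lt hx)
  calc (0:ℝ) = f 0 := h0.symm
    _ ≤ f z := hmono Set.self_mem_Ici hz hz

lemma cubic_le_exp {z : ℝ} (hz : 0 ≤ z) : 1 + z + z^2/2 + z^3/6 ≤ Real.exp z := by
  have step1 : ∀ x : ℝ, 0 ≤ x → 0 ≤ Real.exp x - (1 + x + x^2/2) := by
    intro x hx
    refine nonneg_of_deriv (fun t => Real.exp t - (1 + t + t^2/2))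
      (fun t => Real.exp t - (1 + t)) (fun t => ?_) (by simp) (fun t ht => ?_) hx
    · have := (Real.hasDerivAt_exp t).sub
        (((hasDerivAt_id t).const_add 1).add (((hasDerivAt_id t).pow 2).div_const 2))
      simp only [id_eq] at this
      exact this.congr_deriv (by ring)
    · have := Real.add_one_le_exp t
      linarith
  have := nonneg_of_deriv (fun t => Real.exp t - (1 + t + t^2/2 + t^3/6))
      (fun t => Real.exp t - (1 + t + t^2/2)) (fun t => ?_) (by simp) (fun t ht => step1 t ht) hz
  · linarith
  · have := (Real.hasDerivAt_exp t).sub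
      ((((hasDerivAt_id t).const_add 1).add (((hasDerivAt_id t).pow 2).div_const 2)).add
        (((hasDerivAt_id t).pow 3).div_const 6))
    simp only [id_eq] at this
    exact this.congr_deriv (by ring)

lemma hexp_deriv (t : ℝ) : HasDerivAt (fun x : ℝ => Real.exp (-x)) (-Real.exp (-t)) t := by
  simpa using (hasDerivAt_id t).neg.exp

lemma claimA {z : ℝ} (hz : 0 ≤ z) :
    0 ≤ z * (1 + Real.exp (-z)) - 2 * (1 - Real.exp (-z)) := by
  refine nonneg_of_deriv (fun x => x * (1 + Real.exp (-x)) - 2 * (1 - Real.exp (-x)))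
    (fun t => 1 - Real.exp (-t) - t * Real.exp (-t))
    (fun t => ?_) (by simp) (fun t ht => ?_) hz
  · have h1 : HasDerivAt (fun x : ℝ => x * (1 + Real.exp (-x)))
        (1 * (1 + Real.exp (-t)) + t * (-Real.exp (-t))) t :=
      (hasDerivAt_id t).mul ((hexp_deriv t).const_add 1)
    have h2 : HasDerivAt (fun x : ℝ => 2 * (1 - Real.exp (-x)))
        (2 * (0 - -Real.exp (-t))) t :=
      (((hasDerivAt_const t (1:ℝ)).sub (hexp_deriv t)).const_mul 2)
    have := h1.sub h2
    exact this.congr_deriv (by ring)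
  · have h1 := Real.add_one_le_exp t
    have h2 := Real.exp_pos t
    have h3 : Real.exp (-t) = (Real.exp t)⁻¹ := Real.exp_neg t
    have h4 : (Real.exp t)⁻¹ * Real.exp t = 1 := inv_mul_cancel₀ h2.ne'
    have h5 : 0 ≤ (Real.exp t)⁻¹ * (Real.exp t - 1 - t) :=
      mul_nonneg (inv_nonneg.mpr h2.le) (by linarith)
    rw [h3]
    nlinarith [h5]

lemma claimB {z : ℝ} (hz : 0 ≤ z) :
    0 ≤ (Real.exp z - 1) / 2 - (z / 4 - z ^ 3 / 48) * (1 + Real.exp z) := by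
  refine nonneg_of_deriv
    (fun x => (Real.exp x - 1) / 2 - (x / 4 - x ^ 3 / 48) * (1 + Real.exp x))
    (fun t => Real.exp t / 2 - (1 / 4 - t ^ 2 / 16) * (1 + Real.exp t)
      - (t / 4 - t ^ 3 / 48) * Real.exp t)
    (fun t => ?_) (by simp) (fun t ht => ?_) hz
  · have h1 : HasDerivAt (fun x : ℝ => (Real.exp x - 1) / 2) (Real.exp t / 2) t :=
      ((Real.hasDerivAt_exp t).sub_const 1).div_const 2
    have hp : HasDerivAt (fun x : ℝ => x / 4 - x ^ 3 / 48) (1 / 4 - ↑3 * t ^ 2 / 48) t := by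
      have := ((hasDerivAt_id t).div_const 4).sub (((hasDerivAt_id t).pow 3).div_const 48)
      simpa [Pi.sub_def] using this
    have h2 : HasDerivAt (fun x : ℝ => (x / 4 - x ^ 3 / 48) * (1 + Real.exp x))
        ((1 / 4 - ↑3 * t ^ 2 / 48) * (1 + Real.exp t) + (t / 4 - t ^ 3 / 48) * Real.exp t) t := by
      have := hp.mul ((Real.hasDerivAt_exp t).const_add 1)
      simpa [Pi.mul_def] using this
    have := h1.sub h2
    exact this.congr_deriv (by push_cast; ring)
  · have hc := cubic_le_exp ht
    have hP : 0 ≤ 1 / 4 - t / 4 + t ^ 2 / 16 + t ^ 3 / 48 := by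
      nlinarith [mul_nonneg ht (sq_nonneg (t - 2)), sq_nonneg (7 * t - 8)]
    have hprod : 0 ≤ (Real.exp t - (1 + t + t ^ 2 / 2 + t ^ 3 / 6)) *
        (1 / 4 - t / 4 + t ^ 2 / 16 + t ^ 3 / 48) :=
      mul_nonneg (by linarith) hP
    nlinarith [hprod, pow_nonneg ht 4, pow_nonneg ht 5, pow_nonneg ht 6]

lemma hmain_deriv (t : ℝ) :
    HasDerivAt (fun x : ℝ => Real.log (1 + Real.exp (-x)) - (Real.log 2 - x / 2 + x ^ 2 / 8))
      (-Real.exp (-t) / (1 + Real.exp (-t)) + 1 / 2 - t / 4) t := by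
  have hpos : (0:ℝ) < 1 + Real.exp (-t) := by positivity
  have hlog : HasDerivAt (fun x : ℝ => Real.log (1 + Real.exp (-x)))
      (-Real.exp (-t) / (1 + Real.exp (-t))) t :=
    ((hexp_deriv t).const_add 1).log hpos.ne'
  have hpoly : HasDerivAt (fun x : ℝ => Real.log 2 - x / 2 + x ^ 2 / 8)
      ((0 - 1 / 2) + ↑2 * t ^ 1 / 8) t := by
    have := (((hasDerivAt_const t (Real.log 2)).sub ((hasDerivAt_id t).div_const 2)).add
      (((hasDerivAt_id t).pow 2).div_const 8))
    simpa [Pi.sub_def, Pi.add_def] using this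
  have := hlog.sub hpoly
  exact this.congr_deriv (by ring)

lemma hprime_nonpos {t : ℝ} (ht : 0 ≤ t) :
    -Real.exp (-t) / (1 + Real.exp (-t)) + 1 / 2 - t / 4 ≤ 0 := by
  have hu : (0:ℝ) < 1 + Real.exp (-t) := by positivity
  have key : -Real.exp (-t) / (1 + Real.exp (-t)) + 1 / 2 - t / 4
      = -((t * (1 + Real.exp (-t)) - 2 * (1 - Real.exp (-t))) / (4 * (1 + Real.exp (-t)))) := by
    field_simp
    ring
  rw [key, neg_nonpos]
  exact div_nonneg (claimA ht) (by positivity)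

lemma hprime_lower {t : ℝ} (ht : 0 ≤ t) :
    0 ≤ -Real.exp (-t) / (1 + Real.exp (-t)) + 1 / 2 - t / 4 + t ^ 3 / 48 := by
  have hE := Real.exp_pos t
  have key : -Real.exp (-t) / (1 + Real.exp (-t)) + 1 / 2 - t / 4 + t ^ 3 / 48
      = ((Real.exp t - 1) / 2 - (t / 4 - t ^ 3 / 48) * (1 + Real.exp t)) / (1 + Real.exp t) := by
    rw [Real.exp_neg]
    field_simp
    ring
  rw [key]
  exact div_nonneg (claimB ht) (by positivity)

lemma main_nonneg {z : ℝ} (hz : 0 ≤ z) :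
    |Real.log (1 + Real.exp (-z)) - (Real.log 2 - z / 2 + z ^ 2 / 8)| ≤ z ^ 4 / 192 := by
  have upper : Real.log (1 + Real.exp (-z)) - (Real.log 2 - z / 2 + z ^ 2 / 8) ≤ 0 := by
    have := nonneg_of_deriv
      (fun x => -(Real.log (1 + Real.exp (-x)) - (Real.log 2 - x / 2 + x ^ 2 / 8)))
      (fun t => -(-Real.exp (-t) / (1 + Real.exp (-t)) + 1 / 2 - t / 4))
      (fun t => (hmain_deriv t).neg) (by norm_num [Real.exp_zero])
      (fun t ht => by simpa using hprime_nonpos ht) hz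
    linarith
  have lower : 0 ≤ Real.log (1 + Real.exp (-z)) - (Real.log 2 - z / 2 + z ^ 2 / 8) + z ^ 4 / 192 := by
    refine nonneg_of_deriv
      (fun x => Real.log (1 + Real.exp (-x)) - (Real.log 2 - x / 2 + x ^ 2 / 8) + x ^ 4 / 192)
      (fun t => -Real.exp (-t) / (1 + Real.exp (-t)) + 1 / 2 - t / 4 + ↑4 * t ^ 3 / 192)
      (fun t => ?_) (by norm_num [Real.exp_zero])
      (fun t ht => ?_) hz
    · have := (hmain_deriv t).add (((hasDerivAt_id t).pow 4).div_const 192)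
      simpa [Pi.add_def] using this
    · have := hprime_lower ht
      push_cast
      linarith
  have hz4 : 0 ≤ z ^ 4 / 192 := by positivity
  rw [abs_le]
  constructor <;> linarith

lemma log_one_add_exp (w : ℝ) :
    Real.log (1 + Real.exp w) = w + Real.log (1 + Real.exp (-w)) := by
  have h1 : 1 + Real.exp w = Real.exp w * (1 + Real.exp (-w)) := by
    rw [mul_add, mul_one, ← Real.exp_add]
    simp [add_comm]
  rw [h1, Real.log_mul (Real.exp_ne_zero w) (by positivity), Real.log_exp]

theorem stmt_18 (z : ℝ) :
    |Real.log (1 + Real.exp (-z)) - (Real.log 2 - z / 2 + z ^ 2 / 8)| ≤ z ^ 4 / 192 := by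
  rcases le_total 0 z with hz | hz
  · exact main_nonneg hz
  · have e1 : Real.log (1 + Real.exp (-z)) - (Real.log 2 - z / 2 + z ^ 2 / 8)
        = Real.log (1 + Real.exp (-(-z))) - (Real.log 2 - (-z) / 2 + (-z) ^ 2 / 8) := by
      rw [log_one_add_exp (-z)]
      ring_nf
    have e2 : z ^ 4 / 192 = (-z) ^ 4 / 192 := by ring
    rw [e1, e2]
    exact main_nonneg (by linarith)
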